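/- Let F be a totally complex number field of degree 2k, Λ_b = α_b ψ(O_F) ⊂ ℂ^k, and R = diag(R₁,…,R_k) with |R_i|² = 1/ρ_b + |h_i|². Then the minimum distance of the received lattice satisfies d_R² := min_{λ∈Λ_b\{0}} ∑_i |R_i λ_i|² ≥ α_b² k ∏_{i=1}^k (1/ρ_b + |h_i|²)^{1/k}. -/

import Mathlib

open NumberField
open scoped nonZeroDivisors

/-- Let `F` be a totally complex number field of degree `2k`,
`Λ_b = α_b ψ(O_F) ⊂ ℂᵏ`, and `R = diag(R₁,…,R_k)` with `|R_i|² = 1/ρ_b + |h_i|²`. Then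
for every nonzero `x ∈ O_F` (hence every nonzero point `λ = α_b ψ(x)` of `Λ_b`),
`∑ᵢ |R_i λ_i|² ≥ α_b² k ∏ᵢ (1/ρ_b + |h_i|²)^(1/k)`; that is, the minimum distance of the
received lattice satisfies `d_R² ≥ α_b² k ∏ᵢ (1/ρ_b + |h_i|²)^(1/k)`. -/
theorem received_lattice_min_distance
    (F : Type*) [Field F] [NumberField F] (k : ℕ) (hk : 0 < k)
    (σ : Fin k → (F →+* ℂ))
    (hdeg : Module.finrank ℚ F = 2 * k)
    (hcx : ∀ i, σ i ≠ (starRingEnd ℂ).comp (σ i))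
    (hσ : ∀ φ : F →+* ℂ, ∃! i : Fin k, φ = σ i ∨ φ = (starRingEnd ℂ).comp (σ i))
    (αb ρb : ℝ) (hρ : 0 < ρb) (h : Fin k → ℂ)
    (x : 𝓞 F) (hx : x ≠ 0) :
    ∑ i, (1 / ρb + ‖h i‖ ^ 2) * (αb * ‖σ i (x : F)‖) ^ 2
      ≥ αb ^ 2 * k * ∏ i, (1 / ρb + ‖h i‖ ^ 2) ^ ((1 : ℝ) / k) := by
  set a : Fin k → ℝ := fun i => 1 / ρb + ‖h i‖ ^ 2 with ha
  set b : Fin k → ℝ := fun i => (αb * ‖σ i (x : F)‖) ^ 2 with hb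
  have hapos : ∀ i, 0 < a i := fun i => by positivity
  have hbnn : ∀ i, 0 ≤ b i := fun i => by positivity
  -- Step 1: the product of the squared absolute values of the embeddings is ≥ 1,
  -- since it equals the absolute value of the norm of the nonzero algebraic integer `x`.
  have habs : (1:ℝ) ≤ ∏ i, ‖σ i (x : F)‖ ^ 2 := by
    have key : ∏ φ : F →+* ℂ, ‖φ (x : F)‖
        = ∏ i, ‖σ i (x : F)‖ ^ 2 := by
      classical
      have hf : ∀ (φ : F →+* ℂ) (i : Fin k),
          (hσ φ).choose = i ↔ (φ = σ i ∨ φ = (starRingEnd ℂ).comp (σ i)) := by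
        intro φ i
        constructor
        · rintro rfl; exact (hσ φ).choose_spec.1
        · intro hi; exact ((hσ φ).choose_spec.2 i hi).symm ▸ rfl
      rw [← Finset.prod_fiberwise Finset.univ (fun φ => (hσ φ).choose)
        (fun φ => ‖φ (x : F)‖)]
      refine Finset.prod_congr rfl fun i _ => ?_
      have hset : (Finset.filter (fun φ => (hσ φ).choose = i) Finset.univ)
          = ({σ i, (starRingEnd ℂ).comp (σ i)} : Finset (F →+* ℂ)) := by
        ext φ
        simp only [Finset.mem_filter, Finset.mem_univ, true_and, Finset.mem_insert,
          Finset.mem_singleton]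
        exact hf φ i
      rw [hset, Finset.prod_pair (hcx i)]
      simp [sq, RingHom.comp_apply]
    rw [← key]
    have hn1 : (1:ℝ) ≤ |Algebra.norm ℚ (x : F)| := by
      rw [← Algebra.coe_norm_int, ← Int.cast_one, ← Int.cast_abs, Rat.cast_intCast,
        Int.cast_le]
      exact_mod_cast Int.one_le_abs (Algebra.norm_ne_zero_iff.mpr hx)
    calc (1:ℝ) ≤ |Algebra.norm ℚ (x : F)| := hn1
      _ = ∏ φ : F →+* ℂ, ‖φ (x : F)‖ := by
          have := congr_arg (‖·‖) (Algebra.norm_eq_prod_embeddings ℚ ℂ (x : F))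
          rw [norm_prod] at this
          rw [Fintype.prod_equiv (RingHom.equivRatAlgHom F ℂ)
            (fun φ => ‖φ (x : F)‖)
            (fun f => ‖f (x : F)‖)
            fun _ => by simp [RingHom.equivRatAlgHom_apply]]
          rw [← this, eq_ratCast, Rat.cast_abs, ← Real.norm_eq_abs, ← Complex.norm_real,
            Complex.ofReal_ratCast]
  have hnorm : ((αb^2)^k : ℝ) ≤ ∏ i, b i := by
    have : ∏ i, b i = (αb^2)^k * ∏ i, ‖σ i (x : F)‖ ^ 2 := by
      simp only [hb, mul_pow, Finset.prod_mul_distrib, Finset.prod_const,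
        Finset.card_univ, Fintype.card_fin]
    rw [this]
    nlinarith [habs, pow_nonneg (sq_nonneg αb) k]
  -- Step 2: AM-GM
  have hkR : (0:ℝ) < k := by exact_mod_cast hk
  have h1 := Real.geom_mean_le_arith_mean_weighted Finset.univ (fun _ => (1:ℝ)/k)
    (fun i => a i * b i) (fun i _ => by positivity)
    (by simp [Finset.sum_const, Finset.card_univ]; field_simp)
    (fun i _ => mul_nonneg (hapos i).le (hbnn i))
  simp only [← Finset.mul_sum] at h1
  have h2 : (k:ℝ) * ∏ i, (a i * b i) ^ ((1:ℝ)/k) ≤ ∑ i, a i * b i := by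
    rw [mul_comm, ← le_div_iff₀ hkR]
    calc ∏ i, (a i * b i) ^ ((1:ℝ)/k) ≤ (1/k) * ∑ i, a i * b i := h1
      _ = (∑ i, a i * b i) / k := by ring
  have h3 : ∏ i, (a i * b i) ^ ((1:ℝ)/k)
      = (∏ i, a i ^ ((1:ℝ)/k)) * (∏ i, b i) ^ ((1:ℝ)/k) := by
    rw [← Real.finset_prod_rpow _ _ (fun i _ => hbnn i), ← Finset.prod_mul_distrib]
    exact Finset.prod_congr rfl fun i _ => Real.mul_rpow (hapos i).le (hbnn i)
  have h4 : αb^2 ≤ (∏ i, b i) ^ ((1:ℝ)/k) := by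
    calc αb^2 = ((αb^2)^k : ℝ) ^ ((1:ℝ)/k) := by
          rw [← Real.rpow_natCast (αb^2) k, ← Real.rpow_mul (by positivity),
            mul_one_div_cancel hkR.ne', Real.rpow_one]
      _ ≤ (∏ i, b i) ^ ((1:ℝ)/k) :=
          Real.rpow_le_rpow (by positivity) hnorm (by positivity)
  calc αb ^ 2 * k * ∏ i, a i ^ ((1 : ℝ) / k)
      ≤ (k:ℝ) * ((∏ i, a i ^ ((1:ℝ)/k)) * (∏ i, b i) ^ ((1:ℝ)/k)) := by
        rw [show αb ^ 2 * k * ∏ i, a i ^ ((1 : ℝ) / k)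
          = (k:ℝ) * ((∏ i, a i ^ ((1:ℝ)/k)) * αb^2) by ring]
        exact mul_le_mul_of_nonneg_left
          (mul_le_mul_of_nonneg_left h4
            (Finset.prod_nonneg fun i _ => Real.rpow_nonneg (hapos i).le _)) hkR.le
    _ = (k:ℝ) * ∏ i, (a i * b i) ^ ((1:ℝ)/k) := by rw [h3]
    _ ≤ ∑ i, a i * b i := h2
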